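/- Let f : ℝ^n → ℝ be a nonnegative log-concave function such that the interior of P_f is nonempty. Then sup_{x ∈ ℝ^n} f(x) equals the essential supremum of f over ℝ^n with respect to Lebesgue measure. -/

import Mathlib

open MeasureTheory Set
open scoped ENNReal

/-- A nonnegative function `f : ℝⁿ → ℝ` is log-concave if
`f((1−t)x + t y) ≥ f(x)^(1−t) * f(y)^t` for all `x, y` and `t ∈ [0,1]`. -/
def LogConcaveFn {n : ℕ} (f : (Fin n → ℝ) → ℝ) : Prop :=
  ∀ x y : Fin n → ℝ, ∀ t : ℝ, t ∈ Set.Icc (0 : ℝ) 1 →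
    f x ^ (1 - t) * f y ^ t ≤ f ((1 - t) • x + t • y)

namespace LogConcaveFn

/-- If `f` is nonnegative and log-concave with `P_f = {f > 0}` of nonempty interior,
then the supremum of `f` coincides with its essential supremum with respect to
Lebesgue measure. -/
theorem iSup_eq_essSup {n : ℕ} (f : (Fin n → ℝ) → ℝ)
    (hf0 : ∀ x, 0 ≤ f x) (hf : LogConcaveFn f)
    (hP : (interior {x : Fin n → ℝ | 0 < f x}).Nonempty) :
    (⨆ x, ENNReal.ofReal (f x)) =
      essSup (fun x => ENNReal.ofReal (f x)) volume := by
  set E := essSup (fun x => ENNReal.ofReal (f x)) volume with hE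
  refine le_antisymm ?_ (essSup_le_of_ae_le _ (Filter.Eventually.of_forall fun x =>
    le_iSup (fun x => ENNReal.ofReal (f x)) x))
  refine iSup_le fun y => ?_
  rcases eq_or_lt_of_le (hf0 y) with h0 | hfy
  · simp [← h0]
  -- find a ball inside the positivity set
  obtain ⟨x₀, hx₀⟩ := hP
  obtain ⟨r, hr, hball⟩ := Metric.isOpen_iff.1 isOpen_interior x₀ hx₀
  have hballpos : ∀ z ∈ Metric.ball x₀ r, 0 < f z := by
    intro z hz
    have h := interior_subset (hball hz)
    exact h
  -- find a sub-level set of positive outer measure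
  have hcover : Metric.ball x₀ r ⊆
      ⋃ k : ℕ, {z ∈ Metric.ball x₀ r | (1 : ℝ) / (k + 1) ≤ f z} := by
    intro z hz
    obtain ⟨k, hk⟩ := exists_nat_one_div_lt (hballpos z hz)
    exact Set.mem_iUnion.2 ⟨k, hz, hk.le⟩
  obtain ⟨k, hk⟩ : ∃ k : ℕ,
      0 < volume {z ∈ Metric.ball x₀ r | (1 : ℝ) / (k + 1) ≤ f z} := by
    by_contra h
    push_neg at h
    have h0 : ∀ k : ℕ, volume {z ∈ Metric.ball x₀ r | (1 : ℝ) / (k + 1) ≤ f z} = 0 :=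
      fun k => le_antisymm (h k) (zero_le (a := _))
    have : volume (Metric.ball x₀ r) = 0 := by
      refine le_antisymm ?_ (zero_le (a := _))
      calc volume (Metric.ball x₀ r)
          ≤ volume (⋃ k : ℕ, {z ∈ Metric.ball x₀ r | (1 : ℝ) / (k + 1) ≤ f z}) :=
            measure_mono hcover
        _ ≤ ∑' k : ℕ, volume {z ∈ Metric.ball x₀ r | (1 : ℝ) / (k + 1) ≤ f z} :=
            measure_iUnion_le _
        _ = 0 := by simp only [h0, tsum_zero]
    exact absurd this (Metric.measure_ball_pos _ _ hr).ne'
  set ε : ℝ := (1 : ℝ) / (k + 1) with hεdef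
  have hε : 0 < ε := by positivity
  set A : Set (Fin n → ℝ) := {z ∈ Metric.ball x₀ r | ε ≤ f z} with hA
  -- key estimate for each t ∈ (0,1)
  have key : ∀ t ∈ Set.Ioo (0 : ℝ) 1,
      ENNReal.ofReal (ε ^ (1 - t) * f y ^ t) ≤ E := by
    intro t ht
    by_contra hlt
    push_neg at hlt
    have hae := ENNReal.ae_le_essSup (μ := volume) (fun x => ENNReal.ofReal (f x))
    have hnullset : volume {x | E < ENNReal.ofReal (f x)} = 0 := by
      rw [ae_iff] at hae
      simpa [hE, not_le] using hae
    have hsub : AffineMap.homothety y (1 - t) '' A ⊆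
        {x | E < ENNReal.ofReal (f x)} := by
      rintro _ ⟨z, hz, rfl⟩
      have hmem : t ∈ Set.Icc (0 : ℝ) 1 := ⟨ht.1.le, ht.2.le⟩
      have hφ : AffineMap.homothety y (1 - t) z = (1 - t) • z + t • y := by
        rw [AffineMap.homothety_apply]
        simp only [vsub_eq_sub, vadd_eq_add, smul_sub]
        module
      have h1 : f z ^ (1 - t) * f y ^ t ≤ f (AffineMap.homothety y (1 - t) z) := by
        rw [hφ]; exact hf z y t hmem
      have h2 : ε ^ (1 - t) * f y ^ t ≤ f z ^ (1 - t) * f y ^ t :=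
        mul_le_mul_of_nonneg_right (Real.rpow_le_rpow hε.le hz.2 (by linarith [ht.2]))
          (Real.rpow_nonneg (hf0 y) t)
      have : ENNReal.ofReal (ε ^ (1 - t) * f y ^ t)
          ≤ ENNReal.ofReal (f (AffineMap.homothety y (1 - t) z)) :=
        ENNReal.ofReal_le_ofReal (h2.trans h1)
      exact lt_of_lt_of_le hlt this
    have hnull : volume (AffineMap.homothety y (1 - t) '' A) = 0 :=
      measure_mono_null hsub hnullset
    rw [Measure.addHaar_image_homothety] at hnull
    have h1t : (0 : ℝ) < 1 - t := by linarith [ht.2]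
    rcases mul_eq_zero.1 hnull with h | h
    · rw [ENNReal.ofReal_eq_zero] at h
      have : (0 : ℝ) < |(1 - t) ^ Module.finrank ℝ (Fin n → ℝ)| := by positivity
      linarith
    · exact absurd h hk.ne'
  -- pass to the limit t → 1
  have hcont : Filter.Tendsto (fun t : ℝ => ε ^ (1 - t) * f y ^ t) (nhds 1)
      (nhds (f y)) := by
    have heq : (fun t : ℝ => ε ^ (1 - t) * f y ^ t)
        = fun t => Real.exp ((1 - t) * Real.log ε) * Real.exp (t * Real.log (f y)) := by
      funext t
      rw [Real.rpow_def_of_pos hε, Real.rpow_def_of_pos hfy]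
      ring_nf
    rw [heq]
    have : Continuous fun t : ℝ =>
        Real.exp ((1 - t) * Real.log ε) * Real.exp (t * Real.log (f y)) := by
      continuity
    have h := this.tendsto 1
    simpa [Real.exp_log hfy] using h
  have htend : Filter.Tendsto (fun t : ℝ => ENNReal.ofReal (ε ^ (1 - t) * f y ^ t))
      (nhdsWithin 1 (Set.Ioo (0 : ℝ) 1)) (nhds (ENNReal.ofReal (f y))) :=
    ((ENNReal.continuous_ofReal.tendsto _).comp hcont).mono_left nhdsWithin_le_nhds
  haveI : (nhdsWithin (1 : ℝ) (Set.Ioo (0 : ℝ) 1)).NeBot := by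
    rw [← mem_closure_iff_nhdsWithin_neBot, closure_Ioo (by norm_num : (0 : ℝ) ≠ 1)]
    exact ⟨by norm_num, le_refl 1⟩
  exact le_of_tendsto htend (eventually_mem_nhdsWithin.mono fun t ht => key t ht)
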